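/- Let G be a Lie algebra over a field k and let R : G → G be a linear map satisfying the classical operator Yang-Baxter equation (1.4): R([R(X),Y] − [R(Y),X]) − [R(X),R(Y)] = 0 for all X, Y ∈ G. Then the bilinear operation a*b = [R(a), b] makes G a left-symmetric algebra: As(X,Y,Z) = As(Y,X,Z) for all X, Y, Z ∈ G, where As(X,Y,Z) = (X*Y)*Z − X*(Y*Z). -/
import Mathlib


/-- If `R : G → G` satisfies the classical operator Yang-Baxter
equation (1.4) on a Lie algebra `G`, then `a*b = [R(a),b]` is left-symmetric. -/
theorem stmt_12 {k G : Type*} [Field k] [LieRing G] [LieAlgebra k G]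
    (R : G →ₗ[k] G)
    (hYB : ∀ X Y, R (⁅R X, Y⁆ - ⁅R Y, X⁆) - ⁅R X, R Y⁆ = 0)
    (mul : G → G → G)
    (hmul : ∀ a b, mul a b = ⁅R a, b⁆)
    (As : G → G → G → G)
    (hAs : ∀ X Y Z, As X Y Z = mul (mul X Y) Z - mul X (mul Y Z)) :
    ∀ X Y Z, As X Y Z = As Y X Z := by
  intro X Y Z
  have key : R ⁅R X, Y⁆ - R ⁅R Y, X⁆ = ⁅R X, R Y⁆ := by
    have := hYB X Y
    rw [map_sub] at this
    linear_combination (norm := abel) this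
  simp only [hAs, hmul]
  have h2 : ⁅R ⁅R X, Y⁆, Z⁆ - ⁅R ⁅R Y, X⁆, Z⁆ = ⁅⁅R X, R Y⁆, Z⁆ := by
    rw [← sub_lie, key]
  have h3 : ⁅⁅R X, R Y⁆, Z⁆ = ⁅R X, ⁅R Y, Z⁆⁆ - ⁅R Y, ⁅R X, Z⁆⁆ := by
    rw [lie_lie]
  rw [sub_eq_sub_iff_sub_eq_sub, h2, h3]
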